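/- There exists an optimal conditional machine; that is, there is a conditional machine U such that for every conditional machine V there is a constant d ∈ ℕ with C_U(x|y) ≤ C_V(x|y) + d for all strings x, y. -/

import Mathlib

/-- A string is a finite binary string. -/
abbrev Str : Type := List Bool

/-- A conditional machine: a partial computable function mapping a pair of
strings `(p, y)` to a string. -/
abbrev CondMachine : Type := {V : Str × Str →. Str // Partrec V}

/-- `condC V x y` is `C_V(x|y)`: the least length of a program `p` with
`V (p, y) = x`, as an element of `ℕ∞` (it is `⊤` if no such `p` exists). -/
noncomputable def condC (V : CondMachine) (x y : Str) : ℕ∞ :=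
  sInf {n : ℕ∞ | ∃ p : Str, x ∈ V.1 (p, y) ∧ (p.length : ℕ∞) = n}

/-- A conditional machine `U` is optimal if for every conditional machine `V`
there is a constant `d` with `C_U(x|y) ≤ C_V(x|y) + d` for all `x, y`. -/
def OptimalMachine (U : CondMachine) : Prop :=
  ∀ V : CondMachine, ∃ d : ℕ, ∀ x y : Str, condC U x y ≤ condC V x y + (d : ℕ∞)

/-- For an optimal machine all complexities are finite natural numbers. -/
noncomputable def KC (U : CondMachine) (x y : Str) : ℕ := (condC U x y).toNat

/-- `log2 n = Nat.log 2 (n + 2)`, so `log2 n ≥ 1`. -/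
def log2 (n : ℕ) : ℕ := Nat.log 2 (n + 2)

/-- Split a string into the number of leading `true`s and the part after the
first `false`. -/
def split : Str → ℕ × Str := fun p =>
  p.rec ((0 : ℕ), ([] : Str)) (fun b l ih => if b then (ih.1 + 1, ih.2) else (0, l))

lemma split_cons_true (l : Str) : split (true :: l) = ((split l).1 + 1, (split l).2) := rfl

lemma split_spec (e : ℕ) (q : Str) :
    split (List.replicate e true ++ false :: q) = (e, q) := by
  induction e with
  | zero => rfl
  | succ n ih => rw [List.replicate_succ, List.cons_append, split_cons_true, ih]

lemma split_primrec : Primrec split := by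
  have hb : Primrec fun x : Str × Bool × Str × (ℕ × Str) => x.2.1 := Primrec.fst.comp Primrec.snd
  have hl : Primrec fun x : Str × Bool × Str × (ℕ × Str) => x.2.2.1 :=
    Primrec.fst.comp (Primrec.snd.comp Primrec.snd)
  have hih : Primrec fun x : Str × Bool × Str × (ℕ × Str) => x.2.2.2 :=
    Primrec.snd.comp (Primrec.snd.comp Primrec.snd)
  have h1 : Primrec fun x : Str × Bool × Str × (ℕ × Str) => (x.2.2.2.1 + 1, x.2.2.2.2) :=
    Primrec.pair (Primrec.succ.comp (Primrec.fst.comp hih)) (Primrec.snd.comp hih)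
  have h2 : Primrec fun x : Str × Bool × Str × (ℕ × Str) => ((0 : ℕ), x.2.2.1) :=
    Primrec.pair (Primrec.const 0) hl
  have hh : Primrec₂ fun (a : Str) (x : Bool × Str × (ℕ × Str)) =>
      if x.1 then (x.2.2.1 + 1, x.2.2.2) else ((0 : ℕ), x.2.1) :=
    Primrec.ite (PrimrecPred.comp (p := fun b : Bool => b = true)
      (Primrec.eq.comp Primrec.id (Primrec.const true)) hb) h1 h2
  exact Primrec.list_rec (Primrec.id (α := Str))
    (Primrec.const ((0 : ℕ), ([] : Str))) hh

open Nat.Partrec (Code)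

/-- The universal machine: interpret the leading unary block as a code and run
that code on the rest of the program together with the condition. -/
def Umach : Str × Str →. Str := fun a =>
  ((Denumerable.ofNat Code (split a.1).1).eval
      (Nat.pair (Encodable.encode (split a.1).2) (Encodable.encode a.2))).bind
    fun n => (Encodable.decode (α := Str) n : Part Str)

lemma Umach_partrec : Partrec Umach := by
  have hc : Computable fun a : Str × Str => Denumerable.ofNat Code (split a.1).1 :=
    (Computable.ofNat Code).comp (Primrec.fst.comp (split_primrec.comp Primrec.fst)).to_comp
  have hn : Computable fun a : Str × Str =>
      Nat.pair (Encodable.encode (split a.1).2) (Encodable.encode a.2) :=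
    Primrec.to_comp <| Primrec₂.comp Primrec₂.natPair
      (Primrec.encode.comp (Primrec.snd.comp (split_primrec.comp Primrec.fst)))
      (Primrec.encode.comp Primrec.snd)
  have heval : Partrec fun a : Str × Str => (Denumerable.ofNat Code (split a.1).1).eval
      (Nat.pair (Encodable.encode (split a.1).2) (Encodable.encode a.2)) :=
    Nat.Partrec.Code.eval_part.comp hc hn
  exact heval.bind (Computable.ofOption (Computable.decode.comp Computable.snd))

lemma Umach_simulates (V : CondMachine) : ∃ c : Code, ∀ p y : Str,
    Umach (List.replicate (Encodable.encode c) true ++ false :: p, y) = V.1 (p, y) := by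
  obtain ⟨c, hc⟩ := Nat.Partrec.Code.exists_code.1 V.2
  refine ⟨c, fun p y => ?_⟩
  have h1 : Umach (List.replicate (Encodable.encode c) true ++ false :: p, y) =
      (c.eval (Encodable.encode ((p, y) : Str × Str))).bind
        fun n => (Encodable.decode (α := Str) n : Part Str) := by
    simp [Umach, split_spec, Denumerable.ofNat_encode]
  rw [h1, hc]
  simp [Encodable.encodek]

/-- There exists an optimal conditional machine. -/
theorem exists_optimal_machine :
    ∃ U : CondMachine, ∀ V : CondMachine, ∃ d : ℕ,
      ∀ x y : Str, condC U x y ≤ condC V x y + (d : ℕ∞) := by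
  refine ⟨⟨Umach, Umach_partrec⟩, fun V => ?_⟩
  obtain ⟨c, hc⟩ := Umach_simulates V
  refine ⟨Encodable.encode c + 1, fun x y => ?_⟩
  set S : Set ℕ∞ := {n : ℕ∞ | ∃ p : Str, x ∈ V.1 (p, y) ∧ (p.length : ℕ∞) = n} with hS
  by_cases hne : S.Nonempty
  · obtain ⟨p, hp, hlen⟩ : sInf S ∈ S := csInf_mem hne
    have hx : x ∈ Umach (List.replicate (Encodable.encode c) true ++ false :: p, y) := by
      rw [hc]; exact hp
    have hle : condC ⟨Umach, Umach_partrec⟩ x y ≤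
        (((List.replicate (Encodable.encode c) true ++ false :: p).length : ℕ) : ℕ∞) :=
      sInf_le ⟨_, hx, rfl⟩
    refine hle.trans ?_
    have : condC V x y = sInf S := rfl
    rw [this, ← hlen]
    simp [List.length_append]
    ring_nf
    exact le_refl _
  · have : condC V x y = ⊤ := by
      rw [show condC V x y = sInf S from rfl, Set.not_nonempty_iff_eq_empty.1 hne, sInf_empty]
    simp [this]
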